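/- Integrating the stationary eigenvalue equation: if F : ℝ → ℝ is nonnegative, integrable, C¹ with F' integrable, F(z) → 0 as |z| → ∞, μF is integrable, and λF(z) − cF'(z) + μ(z)F(z) = β(K ⋆ F)(z) holds for all z with K a probability density (∫K = 1) and ∫F > 0, then λ = ∫ (β − μ(z)) F(z) dz / ∫ F(z) dz. -/
import Mathlib


open MeasureTheory Real Filter Convolution

/-- integrating the stationary eigenvalue equation yields
`λ = ∫ (β − μ) F / ∫ F`. -/
theorem stmt_2 (K μ F : ℝ → ℝ) (β c lam : ℝ)
    (hK0 : ∀ y, 0 ≤ K y) (hKint : Integrable K) (hK1 : (∫ y, K y) = 1)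
    (hμ : Continuous μ)
    (hF0 : ∀ z, 0 ≤ F z) (hFint : Integrable F)
    (hFdiff : Differentiable ℝ F) (hF'int : Integrable (deriv F))
    (hFlim : Tendsto F (cocompact ℝ) (nhds 0))
    (hμF : Integrable (fun z => μ z * F z))
    (hFpos : 0 < ∫ z, F z)
    (hstat : ∀ z, lam * F z - c * deriv F z + μ z * F z = β * ∫ t, K (z - t) * F t) :
    lam = (∫ z, (β - μ z) * F z) / ∫ z, F z := by
  have hd : (∫ z, deriv F z) = 0 :=
    integral_eq_zero_of_hasDerivAt_of_integrable (fun x => (hFdiff x).hasDerivAt) hF'int hFint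
  have hconv : (∫ z, (∫ t, K (z - t) * F t)) = ∫ z, F z := by
    have h1 : ∀ z, (∫ t, K (z - t) * F t) = (K ⋆[ContinuousLinearMap.mul ℝ ℝ] F) z := by
      intro z
      rw [convolution_eq_swap]
      simp
    simp_rw [h1]
    rw [integral_convolution (ContinuousLinearMap.mul ℝ ℝ) hKint hFint]
    simp [hK1]
  have hkey : (∫ z, (lam * F z - c * deriv F z + μ z * F z))
      = β * ∫ z, F z := by
    have : (∫ z, (lam * F z - c * deriv F z + μ z * F z))
        = ∫ z, β * ∫ t, K (z - t) * F t := by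
      congr 1; funext z; exact hstat z
    rw [this, integral_const_mul, hconv]
  rw [integral_add (f := fun z => lam * F z - c * deriv F z) (g := fun z => μ z * F z)
      ((hFint.const_mul lam).sub (hF'int.const_mul c)) hμF,
    integral_sub (f := fun z => lam * F z) (g := fun z => c * deriv F z)
      (hFint.const_mul lam) (hF'int.const_mul c),
    integral_const_mul, integral_const_mul, hd, mul_zero, sub_zero] at hkey
  have hnum : (∫ z, (β - μ z) * F z) = β * (∫ z, F z) - ∫ z, μ z * F z := by
    have : ∀ z, (β - μ z) * F z = β * F z - μ z * F z := fun z => by ring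
    simp_rw [this]
    rw [integral_sub (f := fun z => β * F z) (g := fun z => μ z * F z) (hFint.const_mul β) hμF, integral_const_mul]
  rw [hnum, eq_div_iff hFpos.ne']
  linarith
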